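/- Let K be a non-Archimedean field, V a finite-dimensional K-vector space, and for each integer m ≥ 1 let W_m be a K-vector space equipped with a surjective K-linear map π_m : V^{⊗m} → W_m, with W_1 = V and π_1 = id. Given two non-Archimedean norms N, N' on V, let N_m (resp. N'_m) be the quotient norm on W_m induced by the m-fold tensor power norm N^{⊗m} (resp. N'^{⊗m}) via π_m. Then d_∞(N_m, N'_m) ≤ m·d_∞(N, N') for every m ≥ 1, and consequently sup_{m ≥ 1} m^{-1}·d_∞(N_m, N'_m) = d_∞(N, N'). -/

import Mathlib

open scoped BigOperators TensorProduct

/-- A non-Archimedean norm on a `K`-vector space `V`. -/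
def IsNAnorm (K : Type*) {V : Type*} [NormedField K] [AddCommGroup V] [Module K V]
    (N : V → ℝ) : Prop :=
  (∀ v, 0 ≤ N v) ∧ (∀ v, N v = 0 ↔ v = 0) ∧
  (∀ (a : K) (v : V), N (a • v) = ‖a‖ * N v) ∧
  (∀ v w : V, N (v + w) ≤ max (N v) (N w))

/-- The sup-distance `d_∞` between two norms on `V`. -/
noncomputable def dInfty {V : Type*} [AddCommGroup V] (N N' : V → ℝ) : ℝ :=
  sSup {r | ∃ v : V, v ≠ 0 ∧ r = |Real.log (N' v) - Real.log (N v)|}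

/-- The quotient norm induced by a norm `N` on `V` along a (surjective) linear map `π`. -/
noncomputable def quotNorm {K V W : Type*} [Field K] [AddCommGroup V] [Module K V]
    [AddCommGroup W] [Module K W] (π : V →ₗ[K] W) (N : V → ℝ) (x : W) : ℝ :=
  sInf {r | ∃ v : V, π v = x ∧ r = N v}

/-- The `m`-fold tensor power norm `N^{⊗m}` on `V^{⊗m}`: the infimum, over all representations
of `t` as a finite sum of pure tensors, of the maximum of the products of the norms of the
factors. -/
noncomputable def tensorPowNorm (K : Type*) {V : Type*} [NormedField K] [AddCommGroup V]
    [Module K V] (N : V → ℝ) (m : ℕ) (t : ⨂[K]^m V) : ℝ :=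
  sInf {r | ∃ (n : ℕ) (v : Fin (n + 1) → Fin m → V),
    t = ∑ i, PiTensorProduct.tprod K (v i) ∧
    r = Finset.univ.sup' Finset.univ_nonempty fun i => ∏ j, N (v i j)}

/-! ### Auxiliary lemmas -/

section Basic
variable {K : Type*} [NormedField K] {V : Type*} [AddCommGroup V] [Module K V]

lemma IsNAnorm.zero {N : V → ℝ} (hN : IsNAnorm K N) : N 0 = 0 := (hN.2.1 0).mpr rfl

lemma IsNAnorm.pos {N : V → ℝ} (hN : IsNAnorm K N) {v : V} (hv : v ≠ 0) : 0 < N v :=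
  lt_of_le_of_ne (hN.1 v) (fun h => hv ((hN.2.1 v).mp h.symm))

lemma na_sum {N : V → ℝ} (hna : ∀ v w : V, N (v + w) ≤ max (N v) (N w)) {ι : Type*}
    (s : Finset ι) (hs : s.Nonempty) (f : ι → V) :
    N (∑ i ∈ s, f i) ≤ s.sup' hs fun i => N (f i) := by
  induction hs using Finset.Nonempty.cons_induction with
  | singleton a => simp
  | cons a s ha hs ih =>
      rw [Finset.sum_cons, Finset.sup'_cons hs]
      exact le_trans (hna _ _) (max_le_max le_rfl ih)

lemma exists_repr {m : ℕ} (hm : 1 ≤ m) (t : ⨂[K]^m V) :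
    ∃ (n : ℕ) (v : Fin (n + 1) → Fin m → V), t = ∑ i, PiTensorProduct.tprod K (v i) := by
  induction t using PiTensorProduct.induction_on with
  | smul_tprod r f =>
      refine ⟨0, fun _ => Function.update f ⟨0, hm⟩ (r • f ⟨0, hm⟩), ?_⟩
      rw [Fin.sum_univ_one, MultilinearMap.map_update_smul, Function.update_eq_self]
  | add x y hx hy =>
      obtain ⟨n, v, rfl⟩ := hx
      obtain ⟨n', v', rfl⟩ := hy
      refine ⟨n + 1 + n', Fin.append (m := n + 1) (n := n' + 1) v v', ?_⟩
      show _ = ∑ i : Fin ((n + 1) + (n' + 1)), PiTensorProduct.tprod K (Fin.append v v' i)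
      conv_rhs => rw [Fin.sum_univ_add]
      simp [Fin.append_left, Fin.append_right]
end Basic

lemma sInf_comp_le {A : Type*} {P : A → Prop} (hP : ∃ a, P a) {f g : A → ℝ} {c : ℝ} (hc : 0 < c)
    (hg : ∀ a, 0 ≤ g a) (hfg : ∀ a, P a → g a ≤ c * f a) :
    sInf {r | ∃ a, P a ∧ r = g a} ≤ c * sInf {r | ∃ a, P a ∧ r = f a} := by
  have hbdd : BddBelow {r | ∃ a, P a ∧ r = g a} := ⟨0, by rintro r ⟨a, _, rfl⟩; exact hg a⟩
  have h1 : ∀ r ∈ {r | ∃ a, P a ∧ r = f a}, c⁻¹ * sInf {r | ∃ a, P a ∧ r = g a} ≤ r := by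
    rintro r ⟨a, ha, rfl⟩
    rw [inv_mul_le_iff₀ hc]
    have hmem : g a ∈ {r | ∃ a', P a' ∧ r = g a'} := ⟨a, ha, rfl⟩
    exact le_trans (csInf_le hbdd hmem) (hfg a ha)
  obtain ⟨a0, ha0⟩ := hP
  have hne : {r | ∃ a, P a ∧ r = f a}.Nonempty := ⟨f a0, a0, ha0, rfl⟩
  have h2 := le_csInf hne h1
  rwa [inv_mul_le_iff₀ hc] at h2

section CompLemmas
variable {K : Type*} [NormedField K] {V : Type*} [AddCommGroup V] [Module K V]

lemma tpn_nonneg {N : V → ℝ} (hN0 : ∀ v, 0 ≤ N v) (m : ℕ) (t : ⨂[K]^m V) :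
    0 ≤ tensorPowNorm K N m t := by
  apply Real.sInf_nonneg
  rintro r ⟨n, v, -, rfl⟩
  exact le_trans (Finset.prod_nonneg fun j _ => hN0 _)
    (Finset.le_sup' (fun i => ∏ j, N (v i j)) (Finset.mem_univ 0))

lemma tpn_le {N N' : V → ℝ} (hN'0 : ∀ v, 0 ≤ N' v) {C : ℝ} (hC : 0 < C)
    (hcomp : ∀ v, N' v ≤ C * N v) {m : ℕ} (hm : 1 ≤ m) (t : ⨂[K]^m V) :
    tensorPowNorm K N' m t ≤ C ^ m * tensorPowNorm K N m t := by
  have hset : ∀ (M : V → ℝ),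
      {r | ∃ (n : ℕ) (v : Fin (n + 1) → Fin m → V),
        t = ∑ i, PiTensorProduct.tprod K (v i) ∧
        r = Finset.univ.sup' Finset.univ_nonempty fun i => ∏ j, M (v i j)}
      = {r | ∃ a : Σ n : ℕ, Fin (n + 1) → Fin m → V,
          (t = ∑ i, PiTensorProduct.tprod K (a.2 i)) ∧
          r = Finset.univ.sup' Finset.univ_nonempty fun i => ∏ j, M (a.2 i j)} := by
    intro M
    ext r
    constructor
    · rintro ⟨n, v, h1, h2⟩; exact ⟨⟨n, v⟩, h1, h2⟩
    · rintro ⟨⟨n, v⟩, h1, h2⟩; exact ⟨n, v, h1, h2⟩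
  rw [tensorPowNorm, tensorPowNorm, hset N, hset N']
  apply sInf_comp_le
  · obtain ⟨n, v, h⟩ := exists_repr hm t
    exact ⟨⟨n, v⟩, h⟩
  · exact pow_pos hC m
  · rintro ⟨n, v⟩
    exact le_trans (Finset.prod_nonneg fun j _ => hN'0 _)
      (Finset.le_sup' (fun i => ∏ j, N' (v i j)) (Finset.mem_univ 0))
  · rintro ⟨n, v⟩ -
    apply Finset.sup'_le
    intro i _
    calc ∏ j, N' (v i j) ≤ ∏ j, C * N (v i j) :=
          Finset.prod_le_prod (fun j _ => hN'0 _) (fun j _ => hcomp _)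
      _ = C ^ m * ∏ j, N (v i j) := by
          rw [Finset.prod_mul_distrib, Finset.prod_const, Finset.card_univ, Fintype.card_fin]
      _ ≤ C ^ m * Finset.univ.sup' Finset.univ_nonempty fun i => ∏ j, N (v i j) :=
          mul_le_mul_of_nonneg_left
            (Finset.le_sup' (fun i => ∏ j, N (v i j)) (Finset.mem_univ i)) (pow_pos hC m).le

lemma quotNorm_nonneg {W : Type*} [AddCommGroup W] [Module K W]
    {VV : Type*} [AddCommGroup VV] [Module K VV] (π : VV →ₗ[K] W) {M : VV → ℝ}
    (hM : ∀ t, 0 ≤ M t) (x : W) : 0 ≤ quotNorm π M x := by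
  apply Real.sInf_nonneg
  rintro r ⟨t, -, rfl⟩
  exact hM t
end CompLemmas

/-! ### Equivalence of norms in finite dimension -/

section Master
variable {K : Type*} [NormedField K] {V : Type*} [AddCommGroup V] [Module K V]

/-- Normed group structure from an NA norm. -/
noncomputable def IsNAnorm.toNAGroup {N : V → ℝ} (hN : IsNAnorm K N) : NormedAddCommGroup V :=
  AddGroupNorm.toNormedAddCommGroup
    { toFun := N
      map_zero' := hN.zero
      add_le' := fun r s => (hN.2.2.2 r s).trans (max_le_add_of_nonneg (hN.1 r) (hN.1 s))
      neg' := fun r => by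
        have h := hN.2.2.1 (-1 : K) r
        simpa [neg_one_smul] using h
      eq_zero_of_map_eq_zero' := fun x h => (hN.2.1 x).mp h }

noncomputable def IsNAnorm.toNASpace {N : V → ℝ} (hN : IsNAnorm K N) :
    @NormedSpace K V _ hN.toNAGroup.toSeminormedAddCommGroup :=
  @NormedSpace.mk K V _ hN.toNAGroup.toSeminormedAddCommGroup (by exact ‹Module K V›)
    (fun a v => le_of_eq (by unfold IsNAnorm.toNAGroup; exact hN.2.2.1 a v))
end Master

lemma aux_opbound {K : Type*} [NontriviallyNormedField K] [CompleteSpace K]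
    {E F : Type*} [NormedAddCommGroup E] [NormedSpace K E] [FiniteDimensional K E]
    [NormedAddCommGroup F] [NormedSpace K F]
    (f : E →ₗ[K] F) : ∃ C, 0 < C ∧ ∀ v, ‖f v‖ ≤ C * ‖v‖ :=
  ContinuousLinearMap.bound ⟨f, f.continuous_of_finiteDimensional⟩

section NT
variable {K : Type*} [NontriviallyNormedField K] {V : Type*} [AddCommGroup V] [Module K V]

lemma exists_bound_nontrivial [CompleteSpace K]
    [FiniteDimensional K V] {N N' : V → ℝ}
    (hN : IsNAnorm K N) (hN' : IsNAnorm K N') : ∃ C, 0 < C ∧ ∀ v, N' v ≤ C * N v := by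
  obtain ⟨C, hC, h⟩ := @aux_opbound K _ _ V V hN.toNAGroup hN.toNASpace (by exact ‹FiniteDimensional K V›)
    hN'.toNAGroup hN'.toNASpace (by exact (LinearMap.id : V →ₗ[K] V))
  exact ⟨C, hC, fun v => h v⟩
end NT

section Trivial
variable {K : Type*} [NormedField K] {V : Type*} [AddCommGroup V] [Module K V]

def levelSub (htriv : ∀ a : K, a ≠ 0 → ‖a‖ = 1) {N : V → ℝ} (hN : IsNAnorm K N)
    {c : ℝ} (hc : 0 ≤ c) : Submodule K V where
  carrier := {v | N v ≤ c}
  add_mem' := fun hx hy => le_trans (hN.2.2.2 _ _) (max_le hx hy)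
  zero_mem' := by show N 0 ≤ c; rw [hN.zero]; exact hc
  smul_mem' := fun a v hv => by
    rcases eq_or_ne a 0 with rfl | ha
    · show N ((0 : K) • v) ≤ c; rw [zero_smul, hN.zero]; exact hc
    · show N (a • v) ≤ c
      rw [hN.2.2.1, htriv a ha, one_mul]; exact hv

lemma values_finite [FiniteDimensional K V] (htriv : ∀ a : K, a ≠ 0 → ‖a‖ = 1)
    {N : V → ℝ} (hN : IsNAnorm K N) : (N '' {v : V | v ≠ 0}).Finite := by
  have hc0 : ∀ c ∈ N '' {v : V | v ≠ 0}, 0 ≤ c := by rintro c ⟨v, hv, rfl⟩; exact hN.1 v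
  set S := N '' {v : V | v ≠ 0} with hSdef
  let f : S → Fin (Module.finrank K V + 1) := fun c =>
    ⟨Module.finrank K (levelSub htriv hN (hc0 c.1 c.2)),
      Nat.lt_succ_of_le (Submodule.finrank_le _)⟩
  have hmono : ∀ c c' : S, c.1 < c'.1 → (f c).1 < (f c').1 := by
    rintro ⟨c, hc⟩ ⟨c', hc'⟩ hlt
    apply Submodule.finrank_lt_finrank_of_lt
    obtain ⟨v', hv', hNv'⟩ := hc'
    refine SetLike.lt_iff_le_and_exists.mpr ⟨fun v hv => le_trans hv hlt.le, v', ?_, ?_⟩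
    · show N v' ≤ c'; rw [hNv']
    · show ¬ N v' ≤ c; rw [hNv']; exact not_le.mpr hlt
  have hinj : Function.Injective f := by
    intro c c' h
    rcases lt_trichotomy c.1 c'.1 with hlt | heq | hgt
    · exact absurd (congrArg Fin.val h) (Nat.ne_of_lt (hmono _ _ hlt))
    · exact Subtype.ext heq
    · exact absurd (congrArg Fin.val h).symm (Nat.ne_of_lt (hmono _ _ hgt))
  haveI : Finite S := Finite.of_injective f hinj
  exact Set.toFinite S

lemma exists_bound_trivial [FiniteDimensional K V] (htriv : ∀ a : K, a ≠ 0 → ‖a‖ = 1)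
    {N N' : V → ℝ} (hN : IsNAnorm K N) (hN' : IsNAnorm K N') :
    ∃ C, 1 ≤ C ∧ ∀ v, N' v ≤ C * N v := by
  by_cases hV : ∀ v : V, v = 0
  · refine ⟨1, le_rfl, fun v => ?_⟩
    rw [hV v, hN.zero, hN'.zero]; norm_num
  · push_neg at hV
    obtain ⟨v₀, hv₀⟩ := hV
    have hS := values_finite htriv hN
    have hS' := values_finite htriv hN'
    have hFne : hS.toFinset.Nonempty :=
      ⟨N v₀, hS.mem_toFinset.mpr ⟨v₀, hv₀, rfl⟩⟩
    have hF'ne : hS'.toFinset.Nonempty :=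
      ⟨N' v₀, hS'.mem_toFinset.mpr ⟨v₀, hv₀, rfl⟩⟩
    set m₀ := hS.toFinset.min' hFne with hm₀def
    set M' := hS'.toFinset.max' hF'ne with hM'def
    have hm₀pos : 0 < m₀ := by
      have := hS.mem_toFinset.mp (hS.toFinset.min'_mem hFne)
      obtain ⟨v, hv, hNv⟩ := this
      rw [hm₀def, ← hNv]; exact hN.pos hv
    have hM'0 : 0 ≤ M' := by
      have := hS'.mem_toFinset.mp (hS'.toFinset.max'_mem hF'ne)
      obtain ⟨v, hv, hNv⟩ := this
      rw [hM'def, ← hNv]; exact hN'.1 v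
    refine ⟨max 1 (M' / m₀), le_max_left _ _, fun v => ?_⟩
    rcases eq_or_ne v 0 with rfl | hv
    · rw [hN.zero, hN'.zero, mul_zero]
    · have h1 : N' v ≤ M' := hS'.toFinset.le_max' _ (hS'.mem_toFinset.mpr ⟨v, hv, rfl⟩)
      have h2 : m₀ ≤ N v := hS.toFinset.min'_le _ (hS.mem_toFinset.mpr ⟨v, hv, rfl⟩)
      calc N' v ≤ M' := h1
        _ = (M' / m₀) * m₀ := (div_mul_cancel₀ _ hm₀pos.ne').symm
        _ ≤ (M' / m₀) * N v := mul_le_mul_of_nonneg_left h2 (div_nonneg hM'0 hm₀pos.le)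
        _ ≤ max 1 (M' / m₀) * N v := mul_le_mul_of_nonneg_right (le_max_right _ _) (hN.1 v)

lemma exists_bound [CompleteSpace K] [FiniteDimensional K V]
    {N N' : V → ℝ} (hN : IsNAnorm K N) (hN' : IsNAnorm K N') :
    ∃ C, 1 ≤ C ∧ ∀ v, N' v ≤ C * N v := by
  by_cases h : ∃ a : K, a ≠ 0 ∧ ‖a‖ ≠ 1
  · obtain ⟨a, ha0, ha1⟩ := h
    have hb : ∃ b : K, 1 < ‖b‖ := by
      rcases lt_or_gt_of_ne ha1 with h1 | h1
      · exact ⟨a⁻¹, by rw [norm_inv]; exact (one_lt_inv₀ (norm_pos_iff.mpr ha0)).mpr h1⟩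
      · exact ⟨a, h1⟩
    letI : NontriviallyNormedField K := { ‹NormedField K› with non_trivial := hb }
    obtain ⟨C, hC, hc⟩ := exists_bound_nontrivial hN hN'
    exact ⟨max 1 C, le_max_left _ _, fun v =>
      (hc v).trans (mul_le_mul_of_nonneg_right (le_max_right _ _) (hN.1 v))⟩
  · push_neg at h
    exact exists_bound_trivial h hN hN'
end Trivial

/-! ### Log comparison lemmas -/

lemma abs_log_le_of_bounds {c x y : ℝ} (hc : 1 ≤ c) (hx : 0 < x) (hy : 0 < y)
    (h1 : y ≤ c * x) (h2 : x ≤ c * y) : |Real.log y - Real.log x| ≤ Real.log c := by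
  have hc0 : 0 < c := lt_of_lt_of_le one_pos hc
  rw [abs_le]
  constructor
  · have := Real.log_le_log hx h2
    rw [Real.log_mul hc0.ne' hy.ne'] at this
    linarith
  · have := Real.log_le_log hy h1
    rw [Real.log_mul hc0.ne' hx.ne'] at this
    linarith

section DBound
variable {K : Type*} [NormedField K] {V : Type*} [AddCommGroup V] [Module K V]

lemma dInfty_nonneg (N N' : V → ℝ) : 0 ≤ dInfty N N' :=
  Real.sSup_nonneg (by rintro r ⟨v, hv, rfl⟩; exact abs_nonneg _)

lemma dInfty_bddAbove [CompleteSpace K] [FiniteDimensional K V] {N N' : V → ℝ}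
    (hN : IsNAnorm K N) (hN' : IsNAnorm K N') :
    BddAbove {r | ∃ v : V, v ≠ 0 ∧ r = |Real.log (N' v) - Real.log (N v)|} := by
  obtain ⟨C1, hC1, h1⟩ := exists_bound hN hN'
  obtain ⟨C2, hC2, h2⟩ := exists_bound hN' hN
  refine ⟨Real.log (max C1 C2), ?_⟩
  rintro r ⟨v, hv, rfl⟩
  exact abs_log_le_of_bounds (le_trans hC1 (le_max_left _ _)) (hN.pos hv) (hN'.pos hv)
    ((h1 v).trans (mul_le_mul_of_nonneg_right (le_max_left _ _) (hN.1 v)))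
    ((h2 v).trans (mul_le_mul_of_nonneg_right (le_max_right _ _) (hN'.1 v)))

lemma le_exp_dInfty [CompleteSpace K] [FiniteDimensional K V] {N N' : V → ℝ}
    (hN : IsNAnorm K N) (hN' : IsNAnorm K N') :
    ∀ v, N' v ≤ Real.exp (dInfty N N') * N v := by
  intro v
  rcases eq_or_ne v 0 with rfl | hv
  · rw [hN.zero, hN'.zero, mul_zero]
  · have hmem : |Real.log (N' v) - Real.log (N v)| ≤ dInfty N N' :=
      le_csSup (dInfty_bddAbove hN hN') ⟨v, hv, rfl⟩
    have h1 : Real.log (N' v) - Real.log (N v) ≤ dInfty N N' :=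
      le_trans (le_abs_self _) hmem
    calc N' v = Real.exp (Real.log (N' v)) := (Real.exp_log (hN'.pos hv)).symm
      _ ≤ Real.exp (dInfty N N' + Real.log (N v)) := Real.exp_le_exp.mpr (by linarith)
      _ = Real.exp (dInfty N N') * N v := by rw [Real.exp_add, Real.exp_log (hN.pos hv)]

lemma le_exp_dInfty' [CompleteSpace K] [FiniteDimensional K V] {N N' : V → ℝ}
    (hN : IsNAnorm K N) (hN' : IsNAnorm K N') :
    ∀ v, N v ≤ Real.exp (dInfty N N') * N' v := by
  intro v
  rcases eq_or_ne v 0 with rfl | hv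
  · rw [hN.zero, hN'.zero, mul_zero]
  · have hmem : |Real.log (N' v) - Real.log (N v)| ≤ dInfty N N' :=
      le_csSup (dInfty_bddAbove hN hN') ⟨v, hv, rfl⟩
    have h1 : Real.log (N v) - Real.log (N' v) ≤ dInfty N N' := by
      have := neg_le_abs (Real.log (N' v) - Real.log (N v))
      rw [neg_sub] at this
      exact le_trans this hmem
    calc N v = Real.exp (Real.log (N v)) := (Real.exp_log (hN.pos hv)).symm
      _ ≤ Real.exp (dInfty N N' + Real.log (N' v)) := Real.exp_le_exp.mpr (by linarith)
      _ = Real.exp (dInfty N N') * N' v := by rw [Real.exp_add, Real.exp_log (hN'.pos hv)]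
end DBound

/-! ### The case `m = 1` -/

section MOne
variable {K : Type*} [NormedField K] {V : Type*} [AddCommGroup V] [Module K V]
  {Wt : Type*} [AddCommGroup Wt] [Module K Wt]

lemma pi_one_eq (π1 : (⨂[K]^1 V) →ₗ[K] Wt) (e : V ≃ₗ[K] Wt)
    (he : ∀ v : Fin 1 → V, π1 (PiTensorProduct.tprod K v) = e (v 0)) (t : ⨂[K]^1 V) :
    π1 t = e ((PiTensorProduct.subsingletonEquiv (0 : Fin 1)) t) := by
  have h : π1 =
      e.toLinearMap ∘ₗ (PiTensorProduct.subsingletonEquiv (0 : Fin 1)).toLinearMap := by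
    apply PiTensorProduct.ext
    apply MultilinearMap.ext
    intro v
    simp [he v, PiTensorProduct.subsingletonEquiv_apply_tprod]
  rw [h]; rfl

lemma tpn_one {N : V → ℝ} (hN : IsNAnorm K N) (t : ⨂[K]^1 V) :
    tensorPowNorm K N 1 t = N ((PiTensorProduct.subsingletonEquiv (0 : Fin 1)) t) := by
  have hts : t = PiTensorProduct.tprod K
      (fun _ : Fin 1 => (PiTensorProduct.subsingletonEquiv (0 : Fin 1)) t) := by
    apply (PiTensorProduct.subsingletonEquiv (0 : Fin 1)).injective
    rw [PiTensorProduct.subsingletonEquiv_apply_tprod]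
  have hbdd : BddBelow {r | ∃ (n : ℕ) (v : Fin (n + 1) → Fin 1 → V),
      t = ∑ i, PiTensorProduct.tprod K (v i) ∧
      r = Finset.univ.sup' Finset.univ_nonempty fun i => ∏ j, N (v i j)} := by
    refine ⟨0, ?_⟩
    rintro r ⟨n, v, -, rfl⟩
    exact le_trans (Finset.prod_nonneg fun j _ => hN.1 _)
      (Finset.le_sup' (fun i => ∏ j, N (v i j)) (Finset.mem_univ 0))
  apply le_antisymm
  · apply csInf_le hbdd
    refine ⟨0, fun _ _ => (PiTensorProduct.subsingletonEquiv (0 : Fin 1)) t, ?_, ?_⟩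
    · rw [Fin.sum_univ_one]; exact hts
    · simp
  · refine le_csInf ?_ ?_
    · exact ⟨_, ⟨0, fun _ _ => (PiTensorProduct.subsingletonEquiv (0 : Fin 1)) t,
        by rw [Fin.sum_univ_one]; exact hts, rfl⟩⟩
    rintro r ⟨n, v, h1, rfl⟩
    have hqt : (PiTensorProduct.subsingletonEquiv (0 : Fin 1)) t = ∑ i, v i 0 := by
      rw [h1, map_sum]
      simp [PiTensorProduct.subsingletonEquiv_apply_tprod]
    rw [hqt]
    refine le_trans (na_sum hN.2.2.2 _ Finset.univ_nonempty _) ?_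
    apply Finset.sup'_le
    intro i _
    have h2 : N (v i 0) = ∏ j, N (v i j) := (Fin.prod_univ_one fun j => N (v i j)).symm
    rw [h2]
    exact Finset.le_sup' (fun i => ∏ j, N (v i j)) (Finset.mem_univ i)

lemma quot_one {N : V → ℝ} (hN : IsNAnorm K N) (π1 : (⨂[K]^1 V) →ₗ[K] Wt) (e : V ≃ₗ[K] Wt)
    (he : ∀ v : Fin 1 → V, π1 (PiTensorProduct.tprod K v) = e (v 0)) (x : Wt) :
    quotNorm π1 (tensorPowNorm K N 1) x = N (e.symm x) := by
  have hset : {r | ∃ t, π1 t = x ∧ r = tensorPowNorm K N 1 t} = {N (e.symm x)} := by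
    ext r
    simp only [Set.mem_setOf_eq, Set.mem_singleton_iff]
    constructor
    · rintro ⟨t, ht, rfl⟩
      rw [tpn_one hN t]
      rw [pi_one_eq π1 e he t] at ht
      rw [← ht, e.symm_apply_apply]
    · rintro rfl
      refine ⟨(PiTensorProduct.subsingletonEquiv (0 : Fin 1)).symm (e.symm x), ?_, ?_⟩
      · rw [pi_one_eq π1 e he, LinearEquiv.apply_symm_apply, e.apply_symm_apply]
      · rw [tpn_one hN, LinearEquiv.apply_symm_apply]
  rw [quotNorm, hset, csInf_singleton]

lemma d_one {N N' : V → ℝ} (hN : IsNAnorm K N) (hN' : IsNAnorm K N')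
    (π1 : (⨂[K]^1 V) →ₗ[K] Wt) (e : V ≃ₗ[K] Wt)
    (he : ∀ v : Fin 1 → V, π1 (PiTensorProduct.tprod K v) = e (v 0)) :
    dInfty (quotNorm π1 (tensorPowNorm K N 1)) (quotNorm π1 (tensorPowNorm K N' 1))
      = dInfty N N' := by
  rw [dInfty, dInfty]
  congr 1
  ext r
  constructor
  · rintro ⟨x, hx, rfl⟩
    refine ⟨e.symm x, (LinearEquiv.map_ne_zero_iff e.symm).mpr hx, ?_⟩
    rw [quot_one hN π1 e he, quot_one hN' π1 e he]
  · rintro ⟨v, hv, rfl⟩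
    refine ⟨e v, (LinearEquiv.map_ne_zero_iff e).mpr hv, ?_⟩
    rw [quot_one hN π1 e he, quot_one hN' π1 e he, e.symm_apply_apply]
end MOne

/-! ### Main theorem -/

theorem dInfty_of_quotients_of_tensor_powers
    (K V : Type*) [NormedField K] [IsUltrametricDist K] [CompleteSpace K]
    [AddCommGroup V] [Module K V] [FiniteDimensional K V]
    (W : ℕ → Type*) [∀ m, AddCommGroup (W m)] [∀ m, Module K (W m)]
    (π : ∀ m, (⨂[K]^m V) →ₗ[K] W m)
    (hsurj : ∀ m, 1 ≤ m → Function.Surjective (π m))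
    (e : V ≃ₗ[K] W 1)
    (he : ∀ v : Fin 1 → V, π 1 (PiTensorProduct.tprod K v) = e (v 0))
    (N N' : V → ℝ) (hN : IsNAnorm K N) (hN' : IsNAnorm K N') :
    (∀ m, 1 ≤ m →
      dInfty (quotNorm (π m) (tensorPowNorm K N m)) (quotNorm (π m) (tensorPowNorm K N' m))
        ≤ (m : ℝ) * dInfty N N') ∧
    sSup {r | ∃ m : ℕ, 1 ≤ m ∧
        r = (m : ℝ)⁻¹ *
          dInfty (quotNorm (π m) (tensorPowNorm K N m)) (quotNorm (π m) (tensorPowNorm K N' m))}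
      = dInfty N N' := by
  have hd0 : 0 ≤ dInfty N N' := dInfty_nonneg N N'
  have hexp0 : (0 : ℝ) < Real.exp (dInfty N N') := Real.exp_pos _
  have hcmp := le_exp_dInfty hN hN'
  have hcmp' := le_exp_dInfty' hN hN'
  have part1 : ∀ m, 1 ≤ m →
      dInfty (quotNorm (π m) (tensorPowNorm K N m)) (quotNorm (π m) (tensorPowNorm K N' m))
        ≤ (m : ℝ) * dInfty N N' := by
    intro m hm
    have hm0 : (0 : ℝ) ≤ (m : ℝ) * dInfty N N' := mul_nonneg (Nat.cast_nonneg m) hd0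
    rw [dInfty]
    apply Real.sSup_le _ hm0
    rintro r ⟨x, hx, rfl⟩
    have hA0 : 0 ≤ quotNorm (π m) (tensorPowNorm K N m) x :=
      quotNorm_nonneg _ (tpn_nonneg hN.1 m) x
    have hB0 : 0 ≤ quotNorm (π m) (tensorPowNorm K N' m) x :=
      quotNorm_nonneg _ (tpn_nonneg hN'.1 m) x
    have hBA : quotNorm (π m) (tensorPowNorm K N' m) x
        ≤ (Real.exp (dInfty N N')) ^ m * quotNorm (π m) (tensorPowNorm K N m) x := by
      rw [quotNorm, quotNorm]
      exact sInf_comp_le (hsurj m hm x) (pow_pos hexp0 m) (fun t => tpn_nonneg hN'.1 m t)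
        (fun t _ => tpn_le hN'.1 hexp0 hcmp hm t)
    have hAB : quotNorm (π m) (tensorPowNorm K N m) x
        ≤ (Real.exp (dInfty N N')) ^ m * quotNorm (π m) (tensorPowNorm K N' m) x := by
      rw [quotNorm, quotNorm]
      exact sInf_comp_le (hsurj m hm x) (pow_pos hexp0 m) (fun t => tpn_nonneg hN.1 m t)
        (fun t _ => tpn_le hN.1 hexp0 hcmp' hm t)
    rcases eq_or_lt_of_le hA0 with hA | hA
    · have hBz : quotNorm (π m) (tensorPowNorm K N' m) x = 0 := by
        rw [← hA, mul_zero] at hBA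
        exact le_antisymm hBA hB0
      rw [← hA, hBz, Real.log_zero, sub_zero, abs_zero]
      exact hm0
    · have hBpos : 0 < quotNorm (π m) (tensorPowNorm K N' m) x := by
        rcases eq_or_lt_of_le hB0 with hB | hB
        · rw [← hB, mul_zero] at hAB
          exact absurd hAB (not_le.mpr hA)
        · exact hB
      have key := abs_log_le_of_bounds
        (one_le_pow₀ (Real.one_le_exp hd0)) hA hBpos hBA hAB
      rwa [Real.log_pow, Real.log_exp] at key
  refine ⟨part1, ?_⟩
  have hel : ∀ r ∈ {r | ∃ m : ℕ, 1 ≤ m ∧ r = (m : ℝ)⁻¹ *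
      dInfty (quotNorm (π m) (tensorPowNorm K N m))
        (quotNorm (π m) (tensorPowNorm K N' m))}, r ≤ dInfty N N' := by
    rintro r ⟨m, hm, rfl⟩
    calc (m : ℝ)⁻¹ * dInfty (quotNorm (π m) (tensorPowNorm K N m))
          (quotNorm (π m) (tensorPowNorm K N' m))
        ≤ (m : ℝ)⁻¹ * ((m : ℝ) * dInfty N N') :=
          mul_le_mul_of_nonneg_left (part1 m hm) (inv_nonneg.mpr (Nat.cast_nonneg m))
      _ = dInfty N N' := by
          rw [← mul_assoc, inv_mul_cancel₀ (Nat.cast_ne_zero.mpr (by omega)), one_mul]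
  apply le_antisymm
  · exact Real.sSup_le hel hd0
  · have hmem : dInfty N N' ∈ {r | ∃ m : ℕ, 1 ≤ m ∧ r = (m : ℝ)⁻¹ *
        dInfty (quotNorm (π m) (tensorPowNorm K N m))
          (quotNorm (π m) (tensorPowNorm K N' m))} := by
      refine ⟨1, le_rfl, ?_⟩
      rw [d_one hN hN' (π 1) e he, Nat.cast_one, inv_one, one_mul]
    exact le_csSup ⟨dInfty N N', hel⟩ hmem
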